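/- In a dagger compact closed category, the pivotal map i_A : A → A** defined by i_A = (id_{A**} ⊗ η_A†) ∘ (η_{A*} ⊗ id_A) (up to unitors) is unitary, i.e., i_A† = i_A⁻¹. -/

import Mathlib

open CategoryTheory MonoidalCategory

/-- A dagger monoidal structure: an involutive identity-on-objects contravariant functor
compatible with the tensor, for which the structural isomorphisms are unitary. -/
structure DaggerMonoidalStruct (C : Type*) [Category C] [MonoidalCategory C] where
  dag : ∀ {A B : C}, (A ⟶ B) → (B ⟶ A)
  dag_id : ∀ A : C, dag (𝟙 A) = 𝟙 A
  dag_comp : ∀ {A B D : C} (f : A ⟶ B) (g : B ⟶ D), dag (f ≫ g) = dag g ≫ dag f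
  dag_dag : ∀ {A B : C} (f : A ⟶ B), dag (dag f) = f
  dag_tensor : ∀ {A B A' B' : C} (f : A ⟶ A') (g : B ⟶ B'),
    dag (f ⊗ₘ g) = dag f ⊗ₘ dag g
  dag_assoc : ∀ A B D : C, dag (α_ A B D).hom = (α_ A B D).inv
  dag_leftUnitor : ∀ A : C, dag (λ_ A).hom = (λ_ A).inv
  dag_rightUnitor : ∀ A : C, dag (ρ_ A).hom = (ρ_ A).inv

variable {C : Type*} [Category C] [MonoidalCategory C] [SymmetricCategory C] [RightRigidCategory C]

/-- The canonical map `i_A : A ⟶ Aᘁᘁ` of a right autonomous dagger monoidal category,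
defined (up to unitors) from the coevaluation of `Aᘁ` and the dagger of the coevaluation
of `A`. -/
noncomputable def daggerPivMap (D : DaggerMonoidalStruct C) (A : C) : A ⟶ ((Aᘁ)ᘁ : C) :=
  (ρ_ A).inv ≫ (A ◁ η_ (Aᘁ : C) ((Aᘁ)ᘁ)) ≫ (α_ A (Aᘁ : C) (((Aᘁ)ᘁ : C))).inv ≫
    ((D.dag (η_ A (Aᘁ))) ▷ (((Aᘁ)ᘁ : C))) ≫ (λ_ (((Aᘁ)ᘁ : C))).hom

section Aux

/-- The comparison map between two right duals of `X`, composed with the comparison map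
in the reverse direction, is the identity. -/
private lemma aux_dualComp_hom_inv {X Y₁ Y₂ : C} (p₁ : ExactPairing X Y₁)
    (p₂ : ExactPairing X Y₂) :
    ((ρ_ Y₁).inv ≫ Y₁ ◁ p₂.coevaluation' ≫ (α_ Y₁ X Y₂).inv ≫ p₁.evaluation' ▷ Y₂ ≫
        (λ_ Y₂).hom) ≫
      ((ρ_ Y₂).inv ≫ Y₂ ◁ p₁.coevaluation' ≫ (α_ Y₂ X Y₁).inv ≫ p₂.evaluation' ▷ Y₁ ≫
        (λ_ Y₁).hom) = 𝟙 Y₁ := by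
  have h := (rightDualIso p₁ p₂).hom_inv_id
  simpa [rightDualIso, rightAdjointMate, ExactPairing.evaluation, ExactPairing.coevaluation,
    HasRightDual.exact, HasRightDual.rightDual] using h

/-- The key symmetric-monoidal identity allowing to rewrite the dagger of the pivotal map
as a right-dual comparison map. -/
private lemma aux_key (A X P : C) (η : 𝟙_ C ⟶ A ⊗ X) (ε : P ⊗ X ⟶ 𝟙_ C) :
    (λ_ P).inv ≫ η ▷ P ≫ (α_ A X P).hom ≫ A ◁ ((β_ X P).hom ≫ ε) ≫ (ρ_ A).hom =
    (ρ_ P).inv ≫ P ◁ (η ≫ (β_ A X).hom) ≫ (α_ P X A).inv ≫ ε ▷ A ≫ (λ_ A).hom := by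
  have h1 : (λ_ P).inv ≫ η ▷ P = (ρ_ P).inv ≫ P ◁ η ≫ (β_ P (A ⊗ X)).hom := by
    rw [BraidedCategory.braiding_naturality_right, braiding_tensorUnit_right]
    simp
  have h2 : ε ▷ A ≫ (λ_ A).hom = (β_ (P ⊗ X) A).hom ≫ A ◁ ε ≫ (ρ_ A).hom := by
    rw [← BraidedCategory.braiding_naturality_left_assoc,
      braiding_tensorUnit_left]
    simp
  rw [← Category.assoc, h1, MonoidalCategory.whiskerLeft_comp, Category.assoc, Category.assoc, h2]
  simp only [BraidedCategory.braiding_tensor_left_hom, BraidedCategory.braiding_tensor_right_hom,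
    Category.assoc, MonoidalCategory.whiskerLeft_comp]
  simp only [Iso.inv_hom_id_assoc, ← MonoidalCategory.whiskerLeft_comp_assoc,
    SymmetricCategory.symmetry, MonoidalCategory.whiskerLeft_id, Category.id_comp]
  simp only [SymmetricCategory.symmetry_assoc]

variable (D : DaggerMonoidalStruct C)

private lemma aux_dag_inv_of {A B : C} (e : A ≅ B) (h : D.dag e.hom = e.inv) :
    D.dag e.inv = e.hom := by
  have := congrArg D.dag h
  rw [D.dag_dag] at this
  exact this.symm

private lemma aux_dag_whiskerRight {A B : C} (f : A ⟶ B) (X : C) :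
    D.dag (f ▷ X) = D.dag f ▷ X := by
  rw [← MonoidalCategory.tensorHom_id, D.dag_tensor, D.dag_id, MonoidalCategory.tensorHom_id]

private lemma aux_dag_whiskerLeft (X : C) {A B : C} (f : A ⟶ B) :
    D.dag (X ◁ f) = X ◁ D.dag f := by
  rw [← MonoidalCategory.id_tensorHom, D.dag_tensor, D.dag_id, MonoidalCategory.id_tensorHom]

end Aux

/-- In a dagger compact closed category — a dagger symmetric monoidal right autonomous
category whose symmetry is unitary and whose duality units satisfy the compatibility
`η_A = σ ∘ (ε_A)†` — the pivotal map `i_A : A ⟶ Aᘁᘁ` is unitary: `i_A† = i_A⁻¹`. -/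
theorem daggerCompactClosed_pivMap_unitary (D : DaggerMonoidalStruct C)
    (dag_braiding : ∀ A B : C, D.dag (β_ A B).hom = (β_ A B).inv)
    (compat : ∀ A : C, η_ A (Aᘁ) = D.dag (ε_ A (Aᘁ)) ≫ (β_ (Aᘁ : C) A).hom) (A : C) :
    daggerPivMap D A ≫ D.dag (daggerPivMap D A) = 𝟙 A ∧
    D.dag (daggerPivMap D A) ≫ daggerPivMap D A = 𝟙 (((Aᘁ)ᘁ : C)) := by
  set X : C := (Aᘁ : C)
  set P : C := ((Aᘁ)ᘁ : C)
  let p₁ : ExactPairing X A := BraidedCategory.exactPairing_swap A X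
  let p₂ : ExactPairing X P := inferInstance
  -- the dagger of the coevaluation of `A`, via the compatibility assumption
  have hdagη : D.dag (η_ A X) = (β_ A X).hom ≫ ε_ A X := by
    rw [compat A, D.dag_comp, dag_braiding, D.dag_dag,
      SymmetricCategory.braiding_swap_eq_inv_braiding]
  -- the pivotal map is the comparison map from the pairing `p₁` to the pairing `p₂`
  have hpiv : daggerPivMap D A =
      (ρ_ A).inv ≫ A ◁ p₂.coevaluation' ≫ (α_ A X P).inv ≫ p₁.evaluation' ▷ P ≫ (λ_ P).hom := by
    rw [daggerPivMap, hdagη]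
    rfl
  -- the dagger of the pivotal map is the comparison map from `p₂` back to `p₁`
  have hdagpiv : D.dag (daggerPivMap D A) =
      (ρ_ P).inv ≫ P ◁ p₁.coevaluation' ≫ (α_ P X A).inv ≫ p₂.evaluation' ▷ A ≫ (λ_ A).hom := by
    rw [daggerPivMap]
    simp only [D.dag_comp, D.dag_dag, aux_dag_whiskerRight, aux_dag_whiskerLeft,
      D.dag_leftUnitor, aux_dag_inv_of D _ (D.dag_rightUnitor A),
      aux_dag_inv_of D _ (D.dag_assoc A (Aᘁ) ((Aᘁ)ᘁ))]
    -- identify `D.dag (η_ X P)` via the compatibility assumption at `Aᘁ`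
    have hdagη' : D.dag (η_ X P) = (β_ X P).hom ≫ ε_ X P := by
      rw [compat X, D.dag_comp, dag_braiding, D.dag_dag,
        SymmetricCategory.braiding_swap_eq_inv_braiding]
    rw [hdagη']
    have := aux_key (C := C) A X P (η_ A X) (ε_ X P)
    simp only [Category.assoc] at this ⊢
    rw [this]
    have hcoev : p₁.coevaluation' = η_ A X ≫ (β_ A X).hom := by
      show η_ A X ≫ (β_ X A).inv = _
      rw [SymmetricCategory.braiding_swap_eq_inv_braiding]
    rw [hcoev]
    rfl
  constructor
  · rw [hdagpiv, hpiv]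
    exact aux_dualComp_hom_inv p₁ p₂
  · rw [hdagpiv, hpiv]
    have h := (rightDualIso p₁ p₂).inv_hom_id
    simpa [rightDualIso, rightAdjointMate, ExactPairing.evaluation, ExactPairing.coevaluation,
      HasRightDual.exact, HasRightDual.rightDual] using h
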